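/- A commutative Bezout ring is zip if and only if every dense ideal contains a regular element. -/

import Mathlib

/-- A commutative ring is *zip* if every ideal with zero annihilator contains a
finitely generated subideal with zero annihilator. -/
def IsZipRing (R : Type*) [CommRing R] : Prop :=
  ∀ I : Ideal R, Submodule.annihilator I = ⊥ →
    ∃ I₀ : Ideal R, I₀ ≤ I ∧ I₀.FG ∧ Submodule.annihilator I₀ = ⊥

lemma ann_span_singleton_eq_bot_iff {R : Type*} [CommRing R] (r : R) :
    Submodule.annihilator (Ideal.span {r}) = ⊥ ↔ r ∈ nonZeroDivisors R := by
  constructor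
  · intro h; refine mem_nonZeroDivisors_iff_right.mpr ?_; intro x hx
    have hm : x ∈ Submodule.annihilator (Ideal.span {r}) :=
      (Submodule.mem_annihilator_span_singleton r x).mpr (by simpa [smul_eq_mul] using hx)
    rw [h] at hm
    simpa using hm
  · intro hr
    ext x
    simp only [Submodule.mem_bot]
    rw [show Ideal.span {r} = Submodule.span R {r} from rfl,
      Submodule.mem_annihilator_span_singleton, smul_eq_mul]
    exact ⟨fun hx => mem_nonZeroDivisors_iff_right.mp hr x hx, fun hx => by simp [hx]⟩

/-- A commutative Bezout ring is zip iff every dense ideal contains a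
regular element. -/
theorem isZipRing_iff_dense_ideal_contains_regular (R : Type*) [CommRing R] [IsBezout R] :
    IsZipRing R ↔
      ∀ I : Ideal R, Submodule.annihilator I = ⊥ →
        ∃ r ∈ I, r ∈ nonZeroDivisors R := by
  constructor
  · intro hz I hI
    obtain ⟨I₀, hle, hfg, hann⟩ := hz I hI
    have hp : Submodule.IsPrincipal I₀ := IsBezout.isPrincipal_of_FG I₀ hfg
    obtain ⟨r, hr⟩ := hp
    refine ⟨r, hle (hr ▸ Ideal.subset_span rfl), ?_⟩
    rw [hr] at hann
    exact (ann_span_singleton_eq_bot_iff r).mp hann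
  · intro h I hI
    obtain ⟨r, hrI, hr⟩ := h I hI
    exact ⟨Ideal.span {r}, (Ideal.span_singleton_le_iff_mem I).mpr hrI,
      ⟨{r}, by simp⟩, (ann_span_singleton_eq_bot_iff r).mpr hr⟩
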